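/- Assume π̲ = 0 and 0 < 2 t_r < t_k. Define Φ(p) = (t_e / (1 − (t_r/t_k)(1 − F(p)))) · (∫_{0}^{p} x f(x) dx)/F(p). Then Φ is nondecreasing on the region {p ∈ (0, π̄] : F(p) > 0}: for all such p ≤ p', Φ(p) ≤ Φ(p'). (The proof uses that F is concave with F(0) = 0, so F(p) ≥ p f(p).) -/
import Mathlib


open intervalIntegral Set

lemma half_bound (πhi : ℝ) (f : ℝ → ℝ)
    (hcont : ContinuousOn f (Set.Icc 0 πhi))
    (hnn : ∀ x ∈ Set.Icc 0 πhi, 0 ≤ f x)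
    (hanti : ∀ x ∈ Set.Icc 0 πhi, ∀ y ∈ Set.Icc 0 πhi, x ≤ y → f y ≤ f x)
    (p : ℝ) (hp0 : 0 < p) (hp : p ≤ πhi) :
    (∫ x in (0:ℝ)..p, x * f x) ≤ p / 2 * ∫ x in (0:ℝ)..p, f x := by
  have hsub : ∀ a b : ℝ, 0 ≤ a → 0 ≤ b → a ≤ p → b ≤ p → Set.uIcc a b ⊆ Set.Icc 0 πhi := by
    intro a b ha hb ha' hb'
    apply Set.uIcc_subset_Icc ⟨ha, ha'.trans hp⟩ ⟨hb, hb'.trans hp⟩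
  have hcx : ContinuousOn (fun x => x * f x) (Set.Icc 0 πhi) :=
    continuousOn_id.mul hcont
  have hif : ∀ a b : ℝ, 0 ≤ a → 0 ≤ b → a ≤ p → b ≤ p →
      IntervalIntegrable f MeasureTheory.volume a b := fun a b ha hb ha' hb' =>
    (hcont.mono (hsub a b ha hb ha' hb')).intervalIntegrable
  have hifx : ∀ a b : ℝ, 0 ≤ a → 0 ≤ b → a ≤ p → b ≤ p →
      IntervalIntegrable (fun x => x * f x) MeasureTheory.volume a b := fun a b ha hb ha' hb' =>
    (hcx.mono (hsub a b ha hb ha' hb')).intervalIntegrable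
  have hmem : ∀ x ∈ Set.Icc (0:ℝ) (p/2), x ∈ Set.Icc 0 πhi := fun x hx =>
    ⟨hx.1, le_trans (le_trans hx.2 (by linarith)) hp⟩
  have hmem' : ∀ x ∈ Set.Icc (0:ℝ) (p/2), p - x ∈ Set.Icc 0 πhi := fun x hx =>
    ⟨by linarith [hx.2], by linarith [hx.1]⟩
  -- continuity of reflected integrands on [0, p/2]
  have hrefl : ContinuousOn (fun x => f (p - x)) (Set.Icc (0:ℝ) (p/2)) := by
    apply hcont.comp (by fun_prop) hmem'
  have hreflI : IntervalIntegrable (fun x => (p - x) * f (p - x)) MeasureTheory.volume 0 (p/2) := by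
    apply ContinuousOn.intervalIntegrable
    rw [Set.uIcc_of_le (by linarith)]
    exact (by fun_prop : ContinuousOn (fun x : ℝ => p - x) _).mul hrefl
  have hreflI' : IntervalIntegrable (fun x => f (p - x)) MeasureTheory.volume 0 (p/2) := by
    apply ContinuousOn.intervalIntegrable
    rw [Set.uIcc_of_le (by linarith)]
    exact hrefl
  -- split integrals at p/2 and reflect the upper halves
  have e1 : (∫ x in (0:ℝ)..p, x * f x)
      = (∫ x in (0:ℝ)..p/2, x * f x) + ∫ x in (0:ℝ)..p/2, (p - x) * f (p - x) := by
    have hs : (∫ x in (0:ℝ)..p/2, (p - x) * f (p - x)) = ∫ x in (p/2)..p, x * f x := by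
      have := intervalIntegral.integral_comp_sub_left (a := (0:ℝ)) (b := p/2)
        (fun x => x * f x) p
      rw [show p - p/2 = p/2 by ring, show p - 0 = p by ring] at this
      exact this
    rw [hs, intervalIntegral.integral_add_adjacent_intervals
      (hifx 0 (p/2) le_rfl (by linarith) (by linarith) (by linarith))
      (hifx (p/2) p (by linarith) (by linarith) (by linarith) le_rfl)]
  have e2 : (∫ x in (0:ℝ)..p, f x)
      = (∫ x in (0:ℝ)..p/2, f x) + ∫ x in (0:ℝ)..p/2, f (p - x) := by
    have hs : (∫ x in (0:ℝ)..p/2, f (p - x)) = ∫ x in (p/2)..p, f x := by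
      have := intervalIntegral.integral_comp_sub_left (a := (0:ℝ)) (b := p/2) f p
      rw [show p - p/2 = p/2 by ring, show p - 0 = p by ring] at this
      exact this
    rw [hs, intervalIntegral.integral_add_adjacent_intervals
      (hif 0 (p/2) le_rfl (by linarith) (by linarith) (by linarith))
      (hif (p/2) p (by linarith) (by linarith) (by linarith) le_rfl)]
  rw [e1, e2, mul_add]
  rw [← intervalIntegral.integral_add (hifx 0 (p/2) le_rfl (by linarith) (by linarith) (by linarith)) hreflI,
      ← intervalIntegral.integral_const_mul, ← intervalIntegral.integral_const_mul,
      ← intervalIntegral.integral_add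
        ((hif 0 (p/2) le_rfl (by linarith) (by linarith) (by linarith)).const_mul _)
        (hreflI'.const_mul _)]
  apply intervalIntegral.integral_mono_on (by linarith)
  · exact ((hifx 0 (p/2) le_rfl (by linarith) (by linarith) (by linarith)).add hreflI)
  · exact (((hif 0 (p/2) le_rfl (by linarith) (by linarith) (by linarith)).const_mul _).add
      (hreflI'.const_mul _))
  · intro x hx
    have h1 : f (p - x) ≤ f x :=
      hanti x (hmem x hx) (p - x) (hmem' x hx) (by linarith [hx.2])
    have h2 : 0 ≤ f (p - x) := hnn _ (hmem' x hx)
    have h3 : 0 ≤ f x := hnn _ (hmem x hx)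
    have hx2 : x ≤ p / 2 := hx.2
    nlinarith [hx.1]

/-- With `π̲ = 0` and `0 < 2 t_r < t_k`, the function
`Φ(p) = (t_e / (1 − (t_r/t_k)(1 − F(p)))) · (∫_0^p x f(x) dx)/F(p)`
is nondecreasing on `{p ∈ (0, π̄] : F(p) > 0}`. -/
theorem stmt_17
    (πhi : ℝ) (f F : ℝ → ℝ)
    (hπhi : 0 < πhi)
    (hcont : ContinuousOn f (Set.Icc 0 πhi))
    (hnn : ∀ x ∈ Set.Icc 0 πhi, 0 ≤ f x)
    (hanti : ∀ x ∈ Set.Icc 0 πhi, ∀ y ∈ Set.Icc 0 πhi, x ≤ y → f y ≤ f x)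
    (hone : (∫ x in (0:ℝ)..πhi, f x) = 1)
    (hF : ∀ p, F p = ∫ x in (0:ℝ)..p, f x)
    (tk te tr : ℝ) (htk : 0 < tk) (hte : 0 < te) (htr : 0 < tr) (h4 : 2 * tr < tk)
    (Φ : ℝ → ℝ)
    (hΦ : ∀ p, Φ p = (te / (1 - (tr / tk) * (1 - F p))) *
      ((∫ x in (0:ℝ)..p, x * f x) / F p))
    (p p' : ℝ) (hp0 : 0 < p) (hp'hi : p' ≤ πhi) (hpp' : p ≤ p')
    (hFp : 0 < F p) (hFp' : 0 < F p') :
    Φ p ≤ Φ p' := by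
  set c : ℝ := tr / tk with hc_def
  have hc0 : 0 < c := div_pos htr htk
  have hc : c < 1/2 := by rw [hc_def, div_lt_iff₀ htk]; linarith
  have hsub : ∀ a b : ℝ, 0 ≤ a → 0 ≤ b → a ≤ πhi → b ≤ πhi →
      Set.uIcc a b ⊆ Set.Icc 0 πhi := fun a b ha hb ha' hb' =>
    Set.uIcc_subset_Icc ⟨ha, ha'⟩ ⟨hb, hb'⟩
  have hcx : ContinuousOn (fun x => x * f x) (Set.Icc 0 πhi) := continuousOn_id.mul hcont
  have hif : ∀ a b : ℝ, 0 ≤ a → 0 ≤ b → a ≤ πhi → b ≤ πhi →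
      IntervalIntegrable f MeasureTheory.volume a b := fun a b ha hb ha' hb' =>
    (hcont.mono (hsub a b ha hb ha' hb')).intervalIntegrable
  have hifx : ∀ a b : ℝ, 0 ≤ a → 0 ≤ b → a ≤ πhi → b ≤ πhi →
      IntervalIntegrable (fun x => x * f x) MeasureTheory.volume a b := fun a b ha hb ha' hb' =>
    (hcx.mono (hsub a b ha hb ha' hb')).intervalIntegrable
  have hp'0 : 0 < p' := lt_of_lt_of_le hp0 hpp'
  have hpphi : p ≤ πhi := hpp'.trans hp'hi
  -- abbreviations
  set I : ℝ := ∫ x in (0:ℝ)..p, x * f x with hI_def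
  set J : ℝ := ∫ x in p..p', x * f x with hJ_def
  set G : ℝ := ∫ x in p..p', f x with hG_def
  have hFsplit : F p' = F p + G := by
    rw [hF, hF, hG_def,
      ← intervalIntegral.integral_add_adjacent_intervals
        (hif 0 p le_rfl hp0.le hπhi.le hpphi)
        (hif p p' hp0.le hp'0.le hpphi hp'hi)]
  have hIsplit : (∫ x in (0:ℝ)..p', x * f x) = I + J := by
    rw [hI_def, hJ_def,
      ← intervalIntegral.integral_add_adjacent_intervals
        (hifx 0 p le_rfl hp0.le hπhi.le hpphi)
        (hifx p p' hp0.le hp'0.le hpphi hp'hi)]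
  have hG0 : 0 ≤ G := by
    apply intervalIntegral.integral_nonneg hpp'
    intro x hx
    exact hnn x ⟨hp0.le.trans hx.1, hx.2.trans hp'hi⟩
  have hI0 : 0 ≤ I := by
    apply intervalIntegral.integral_nonneg hp0.le
    intro x hx
    exact mul_nonneg hx.1 (hnn x ⟨hx.1, hx.2.trans hpphi⟩)
  have hJlb : p * G ≤ J := by
    rw [hG_def, ← intervalIntegral.integral_const_mul]
    apply intervalIntegral.integral_mono_on hpp'
      ((hif p p' hp0.le hp'0.le hpphi hp'hi).const_mul _)
      (hifx p p' hp0.le hp'0.le hpphi hp'hi)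
    intro x hx
    exact mul_le_mul_of_nonneg_right hx.1 (hnn x ⟨hp0.le.trans hx.1, hx.2.trans hp'hi⟩)
  have hFp'le1 : F p' ≤ 1 := by
    rw [hF, ← hone,
      ← intervalIntegral.integral_add_adjacent_intervals
        (hif 0 p' le_rfl hp'0.le hπhi.le hp'hi)
        (hif p' πhi hp'0.le hπhi.le hp'hi le_rfl)]
    have : 0 ≤ ∫ x in p'..πhi, f x := by
      apply intervalIntegral.integral_nonneg hp'hi
      intro x hx
      exact hnn x ⟨hp'0.le.trans hx.1, hx.2⟩
    linarith
  have hconc : I ≤ p / 2 * F p := by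
    rw [hI_def, hF]
    exact half_bound πhi f hcont hnn hanti p hp0 hpphi
  -- denominators
  have hD : 0 < 1 - c * (1 - F p) := by nlinarith [mul_pos hc0 hFp]
  have hD' : 0 < 1 - c * (1 - F p') := by nlinarith [mul_pos hc0 hFp']
  rw [hΦ, hΦ, hIsplit, div_mul_div_comm, div_mul_div_comm, ← hI_def,
    div_le_div_iff₀ (by positivity) (by positivity)]
  have hcFp : 0 ≤ c * F p := mul_nonneg hc0.le hFp.le
  have hcFp' : 0 ≤ c * F p' := mul_nonneg hc0.le hFp'.le
  have hcF' : c * F p' ≤ 1 - c * (1 - F p) := by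
    nlinarith [mul_le_mul_of_nonneg_left hFp'le1 hc0.le]
  have key : I * ((1 - c * (1 - F p')) * F p') ≤ (I + J) * ((1 - c * (1 - F p)) * F p) := by
    rw [hFsplit]
    have h1 : I * G * ((1 - c * (1 - F p)) + c * (F p + G))
        ≤ (p / 2 * F p) * G * ((1 - c * (1 - F p)) + c * (F p + G)) := by
      apply mul_le_mul_of_nonneg_right (mul_le_mul_of_nonneg_right hconc hG0)
      rw [← hFsplit]; linarith [hcFp']
    have h2 : (p / 2 * F p) * G * ((1 - c * (1 - F p)) + c * (F p + G))
        ≤ (p / 2 * F p) * G * (2 * (1 - c * (1 - F p))) := by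
      apply mul_le_mul_of_nonneg_left _ (by positivity)
      rw [← hFsplit]; linarith
    have h3 : p * G * ((1 - c * (1 - F p)) * F p) ≤ J * ((1 - c * (1 - F p)) * F p) := by
      apply mul_le_mul_of_nonneg_right hJlb (by positivity)
    linarith [h1, h2, h3]
  linarith [mul_le_mul_of_nonneg_left key hte.le]
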